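/- For every positive integer m, the second-degree-2 Davenport constant of ℤ/2ℤ satisfies D^{(m)}(ℤ_2) = m + 2^{ν₂(m)}, where ν₂(m) is the 2-adic valuation of m. Concretely: (a) for m+1 ≤ j < m + 2^{ν₂(m)}, the binomial coefficient C(j, m) is odd; (b) C(m + 2^{ν₂(m)}, m) is even; (c) every sequence over ℤ/2ℤ of length m + 2^{ν₂(m)} contains a subsequence S' of length ≥ m with e_m(S') = 0 in ℤ/2ℤ, and there is a sequence of length m + 2^{ν₂(m)} − 1 with no such subsequence. -/

import Mathlib

open Finset

/-- The `m`-th elementary symmetric expression of the subsequence of `g` selected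
by the index set `J`. -/
def eSym {n : ℕ} {R : Type*} [CommRing R] (m : ℕ) (g : Fin n → R) (J : Finset (Fin n)) : R :=
  ∑ T ∈ J.powersetCard m, ∏ i ∈ T, g i

lemma lucas2 (n k : ℕ) :
    Nat.choose n k ≡ Nat.choose (n % 2) (k % 2) * Nat.choose (n / 2) (k / 2) [MOD 2] :=
  Choose.choose_modEq_choose_mod_mul_choose_div_nat (p := 2)

lemma oddA : ∀ k m r : ℕ, 2 ^ k ∣ m → r < 2 ^ k → Odd (Nat.choose (m + r) r) := by
  intro k
  induction k with
  | zero =>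
    intro m r _ hr
    interval_cases r
    simp
  | succ k ih =>
    intro m r hm hr
    have hme : 2 ∣ m := dvd_trans (dvd_pow_self 2 (Nat.succ_ne_zero k)) hm
    have h1 : (m + r) % 2 = r % 2 := by omega
    have h2 : (m + r) / 2 = m / 2 + r / 2 := by omega
    have h3 : 2 ^ k ∣ m / 2 := by
      obtain ⟨c, rfl⟩ := hm
      rw [pow_succ', mul_assoc, Nat.mul_div_cancel_left _ (by norm_num : 0 < 2)]
      exact dvd_mul_right _ _
    have h4 : r / 2 < 2 ^ k := by
      have hp : 2 ^ (k + 1) = 2 * 2 ^ k := pow_succ' 2 k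
      omega
    have hih := ih (m / 2) (r / 2) h3 h4
    have hl := lucas2 (m + r) r
    rw [h1, Nat.choose_self, one_mul, h2] at hl
    rw [Nat.odd_iff] at hih ⊢
    rw [Nat.ModEq] at hl
    omega

lemma evenB : ∀ k m : ℕ, 2 ^ k ∣ m → ¬ 2 ^ (k + 1) ∣ m →
    Even (Nat.choose (m + 2 ^ k) (2 ^ k)) := by
  intro k
  induction k with
  | zero =>
    intro m _ hm
    simp only [pow_zero, pow_one] at *
    rw [Nat.choose_one_right]
    rw [Nat.even_iff]
    omega
  | succ k ih =>
    intro m hm hm2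
    have hme : 2 ∣ m := dvd_trans (dvd_pow_self 2 (Nat.succ_ne_zero k)) hm
    have hp : 2 ^ (k + 1) = 2 * 2 ^ k := pow_succ' 2 k
    have hp2 : 2 ^ (k + 2) = 2 * 2 ^ (k + 1) := pow_succ' 2 (k + 1)
    have h3 : 2 ^ k ∣ m / 2 := by
      obtain ⟨c, rfl⟩ := hm
      rw [pow_succ', mul_assoc, Nat.mul_div_cancel_left _ (by norm_num : 0 < 2)]
      exact dvd_mul_right _ _
    have h4 : ¬ 2 ^ (k + 1) ∣ m / 2 := by
      rintro ⟨c, hc⟩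
      refine hm2 ⟨c, ?_⟩
      show m = 2 ^ (k + 1 + 1) * c
      have he : 2 ^ (k + 1 + 1) * c = 2 * (2 ^ (k + 1) * c) := by
        rw [pow_succ' 2 (k + 1)]; ring
      omega
    have hih := ih (m / 2) h3 h4
    have hl := lucas2 (m + 2 ^ (k + 1)) (2 ^ (k + 1))
    have e1 : (m + 2 ^ (k + 1)) % 2 = 0 := by omega
    have e2 : 2 ^ (k + 1) % 2 = 0 := by omega
    have e3 : (m + 2 ^ (k + 1)) / 2 = m / 2 + 2 ^ k := by omega
    have e4 : 2 ^ (k + 1) / 2 = 2 ^ k := by omega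
    rw [e1, e2, e3, e4, Nat.choose_self, one_mul, Nat.ModEq] at hl
    rw [Nat.even_iff] at hih ⊢
    omega

lemma zmod2_cases : ∀ x : ZMod 2, x = 0 ∨ x = 1 := by decide

lemma eSym_eq_choose {n : ℕ} (m : ℕ) (g : Fin n → ZMod 2) (J : Finset (Fin n)) :
    eSym m g J = ((J.filter (fun i => g i = 1)).card.choose m : ZMod 2) := by
  classical
  set S := J.filter (fun i => g i = 1) with hS
  have hstep : eSym m g J = ∑ T ∈ J.powersetCard m, if T ⊆ S then (1 : ZMod 2) else 0 := by
    refine Finset.sum_congr rfl fun T hT => ?_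
    by_cases h : T ⊆ S
    · rw [if_pos h]
      exact Finset.prod_eq_one fun i hi => (Finset.mem_filter.mp (h hi)).2
    · rw [if_neg h]
      obtain ⟨i, hiT, hiS⟩ := Finset.not_subset.mp h
      have hiJ : i ∈ J := (Finset.mem_powersetCard.mp hT).1 hiT
      have h0 : g i = 0 := by
        rcases zmod2_cases (g i) with h0 | h1
        · exact h0
        · exact absurd (Finset.mem_filter.mpr ⟨hiJ, h1⟩) hiS
      exact Finset.prod_eq_zero hiT h0
  rw [hstep, Finset.sum_boole]
  have hfilt : (J.powersetCard m).filter (fun T => T ⊆ S) = S.powersetCard m := by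
    ext T
    simp only [Finset.mem_filter, Finset.mem_powersetCard]
    constructor
    · rintro ⟨⟨_, hcard⟩, hTS⟩; exact ⟨hTS, hcard⟩
    · rintro ⟨hTS, hcard⟩
      exact ⟨⟨hTS.trans (Finset.filter_subset _ _), hcard⟩, hTS⟩
  rw [hfilt, Finset.card_powersetCard]

theorem stmt_6 (m : ℕ) (hm : 1 ≤ m) :
    (∀ j : ℕ, m + 1 ≤ j → j < m + 2 ^ padicValNat 2 m → Odd (Nat.choose j m)) ∧
    Even (Nat.choose (m + 2 ^ padicValNat 2 m) m) ∧
    (∀ n : ℕ, m + 2 ^ padicValNat 2 m ≤ n → ∀ g : Fin n → ZMod 2,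
      ∃ J : Finset (Fin n), m ≤ J.card ∧ eSym m g J = 0) ∧
    (∃ g : Fin (m + 2 ^ padicValNat 2 m - 1) → ZMod 2,
      ∀ J : Finset (Fin (m + 2 ^ padicValNat 2 m - 1)), m ≤ J.card → eSym m g J ≠ 0) := by
  classical
  set k := padicValNat 2 m with hk
  have hdvd : 2 ^ k ∣ m := pow_padicValNat_dvd
  have hndvd : ¬ 2 ^ (k + 1) ∣ m := pow_succ_padicValNat_not_dvd (by omega)
  have hodd : ∀ j : ℕ, m ≤ j → j < m + 2 ^ k → Odd (Nat.choose j m) := by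
    intro j hj1 hj2
    obtain ⟨r, rfl⟩ := Nat.exists_eq_add_of_le hj1
    have hr : r < 2 ^ k := by omega
    have h := oddA k m r hdvd hr
    have hsym : (m + r).choose m = (m + r).choose r := by
      rw [← Nat.choose_symm (Nat.le_add_right m r), Nat.add_sub_cancel_left]
    rwa [hsym]
  have heven : Even (Nat.choose (m + 2 ^ k) m) := by
    have h := evenB k m hdvd hndvd
    have hsym : (m + 2 ^ k).choose m = (m + 2 ^ k).choose (2 ^ k) := by
      rw [← Nat.choose_symm (Nat.le_add_right m (2 ^ k)), Nat.add_sub_cancel_left]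
    rwa [hsym]
  refine ⟨fun j hj1 hj2 => hodd j (by omega) hj2, heven, ?_, ?_⟩
  · intro n hn g
    set O := Finset.univ.filter (fun i : Fin n => g i = 1) with hO
    set Z := Finset.univ.filter (fun i : Fin n => ¬ g i = 1) with hZ
    have hcards : O.card + Z.card = n := by
      rw [hO, hZ, Finset.card_filter_add_card_filter_not, Finset.card_univ, Fintype.card_fin]
    by_cases ht : m + 2 ^ k ≤ O.card
    · obtain ⟨J, hJO, hJcard⟩ := Finset.exists_subset_card_eq (s := O) (n := m + 2 ^ k) ht
      refine ⟨J, by omega, ?_⟩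
      rw [eSym_eq_choose]
      have hfJ : J.filter (fun i => g i = 1) = J :=
        Finset.filter_true_of_mem fun i hi => (Finset.mem_filter.mp (hJO hi)).2
      rw [hfJ, hJcard, ZMod.natCast_eq_zero_iff]
      exact heven.two_dvd
    · obtain ⟨O', hO'O, hO'card⟩ :=
        Finset.exists_subset_card_eq (s := O) (n := min (m - 1) O.card) (min_le_right _ _)
      have hdisj : Disjoint Z O' := by
        refine Finset.disjoint_left.mpr fun i hiZ hiO' => ?_
        exact (Finset.mem_filter.mp hiZ).2 (Finset.mem_filter.mp (hO'O hiO')).2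
      refine ⟨Z ∪ O', ?_, ?_⟩
      · rw [Finset.card_union_of_disjoint hdisj, hO'card]
        have h2k : 1 ≤ 2 ^ k := Nat.one_le_two_pow
        omega
      · rw [eSym_eq_choose]
        have hfJ : (Z ∪ O').filter (fun i => g i = 1) = O' := by
          rw [Finset.filter_union]
          rw [Finset.filter_false_of_mem (fun i hi => (Finset.mem_filter.mp hi).2),
            Finset.filter_true_of_mem (fun i hi => (Finset.mem_filter.mp (hO'O hi)).2)]
          exact Finset.empty_union _
        rw [hfJ, hO'card, Nat.choose_eq_zero_of_lt (by omega), Nat.cast_zero]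
  · refine ⟨fun _ => 1, fun J hJ => ?_⟩
    rw [eSym_eq_choose]
    have hfJ : J.filter (fun i => (1 : ZMod 2) = 1) = J := Finset.filter_true_of_mem fun _ _ => rfl
    rw [hfJ]
    have hJle : J.card ≤ m + 2 ^ k - 1 := by
      have := Finset.card_le_univ J
      simpa using this
    have h2k : 1 ≤ 2 ^ k := Nat.one_le_two_pow
    have hoddJ := hodd J.card hJ (by omega)
    rw [Ne, ZMod.natCast_eq_zero_iff]
    rw [Nat.odd_iff] at hoddJ
    omega
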